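/- arXiv:1002.3439 — 7 statements merged into one kernel-verified Lean document; each statement's English description precedes it below -/
import Mathlib

section
/- Let m be the smallest positive integer for which there exist an integer n ≥ 1 and an integer i with 0 ≤ i < p satisfying m·m_p = n·m_0 + m_i. Then m = a + 1, and in this minimal relation necessarily i = p − b and n = a + d. -/
lemma key_lemma (p d a b M n i : ℕ) (hp : 2 ≤ p) (hd : 1 ≤ d)
    (hgcd : Nat.gcd (a*p+b) d = 1) (hM : 1 ≤ M) (hi : i < p)
    (heq : M * (a*p+b+p*d) = n*(a*p+b) + (a*p+b+i*d)) :
    ∃ s, 1 ≤ s ∧ n + 1 = M + d*s ∧ s*(a*p+b) + i = M*p := by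
  have hiMp : i < M * p := lt_of_lt_of_le hi (Nat.le_mul_of_pos_left p hM)
  -- work in ℤ
  have heqZ : (M:ℤ) * (a*p+b) + M*p*d = (n+1)*(a*p+b) + i*d := by
    have := congrArg (Nat.cast : ℕ → ℤ) heq
    push_cast at this
    ring_nf at this ⊢
    linarith
  have hm0nn : (0:ℤ) ≤ (a:ℤ)*p+b := by positivity
  have hMn : M ≤ n := by
    by_contra hc
    push_neg at hc
    have h1 : ((M:ℤ) - (n+1)) * ((a:ℤ)*p+b) = ((i:ℤ) - M*p) * d := by ring_nf; linarith [heqZ]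
    have h2 : (0:ℤ) ≤ ((M:ℤ) - (n+1)) * ((a:ℤ)*p+b) := by
      have : (0:ℤ) ≤ (M:ℤ) - (n+1) := by
        have : (n:ℤ) + 1 ≤ M := by exact_mod_cast hc
        linarith
      exact mul_nonneg this hm0nn
    have h3 : ((i:ℤ) - M*p) * d < 0 := by
      have : (i:ℤ) < (M:ℤ)*p := by exact_mod_cast hiMp
      have hdz : (0:ℤ) < d := by exact_mod_cast hd
      nlinarith
    linarith
  have h1 : ((n:ℤ) + 1 - M) * ((a:ℤ)*p+b) = ((M:ℤ)*p - i) * d := by ring_nf; linarith [heqZ]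
  have hcop : IsCoprime ((d:ℤ)) ((a:ℤ)*p+b) := by
    rw [Int.isCoprime_iff_gcd_eq_one]
    have : ((a:ℤ)*p+b) = ((a*p+b : ℕ) : ℤ) := by push_cast; ring
    rw [this]
    rw [Int.gcd_natCast_natCast, Nat.gcd_comm]
    exact hgcd
  have hdvd : (d:ℤ) ∣ ((n:ℤ) + 1 - M) := by
    apply hcop.dvd_of_dvd_mul_right
    rw [h1]
    exact ⟨(M:ℤ)*p - i, by ring⟩
  obtain ⟨s, hs⟩ := hdvd
  have hspos : 0 < s := by
    have hdz : (0:ℤ) < d := by exact_mod_cast hd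
    have : 0 < (n:ℤ) + 1 - M := by
      have : (M:ℤ) ≤ n := by exact_mod_cast hMn
      linarith
    nlinarith
  refine ⟨s.toNat, by omega, ?_, ?_⟩
  · have : (n:ℤ) + 1 = M + d * s.toNat := by
      rw [Int.toNat_of_nonneg hspos.le]; linarith [hs]
    exact_mod_cast this
  · have hdz : (0:ℤ) < d := by exact_mod_cast hd
    have h2 : (s:ℤ) * ((a:ℤ)*p+b) = (M:ℤ)*p - i := by
      have := h1
      rw [hs] at this
      have h3 : ((s:ℤ) * ((a:ℤ)*p+b)) * d = ((M:ℤ)*p - i) * d := by linarith [this]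
      exact mul_right_cancel₀ (by linarith : (d:ℤ) ≠ 0) h3
    have : (s.toNat : ℤ) * ((a:ℤ)*p+b) + i = (M:ℤ)*p := by
      rw [Int.toNat_of_nonneg hspos.le]; linarith
    exact_mod_cast this

/-- Let `M` be the smallest positive integer for which there exist `n ≥ 1` and
`0 ≤ i < p` with `M·m_p = n·m_0 + m_i`. Then `M = a + 1`, and in this minimal relation
necessarily `i = p - b` and `n = a + d`. -/
theorem smallest_multiple_relation
    (p d a b : ℕ) (hp : 2 ≤ p) (hd : 1 ≤ d) (ha : 1 ≤ a) (hb1 : 1 ≤ b) (hbp : b ≤ p)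
    (m : ℕ → ℕ) (hm : ∀ i, m i = a * p + b + i * d)
    (hgcd : Nat.gcd (m 0) d = 1)
    (hmin : ∀ i ≤ p, m i ∉ AddSubmonoid.closure {x : ℕ | ∃ j ≤ p, j ≠ i ∧ x = m j})
    (M : ℕ) (hMpos : 1 ≤ M)
    (hMrel : ∃ n, 1 ≤ n ∧ ∃ i, i < p ∧ M * m p = n * m 0 + m i)
    (hMmin : ∀ M', 1 ≤ M' →
      (∃ n, 1 ≤ n ∧ ∃ i, i < p ∧ M' * m p = n * m 0 + m i) → M ≤ M') :
    M = a + 1 ∧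
      ∀ n, 1 ≤ n → ∀ i, i < p → M * m p = n * m 0 + m i → i = p - b ∧ n = a + d := by
  have hgcd' : Nat.gcd (a*p+b) d = 1 := by
    rw [hm 0] at hgcd; simpa using hgcd
  obtain ⟨c, hc⟩ : ∃ c, p = b + c := ⟨p - b, by omega⟩
  -- the witness relation at M' = a + 1
  have hwit : (a+1) * m p = (a+d) * m 0 + m (p - b) := by
    rw [hm, hm, hm]
    have hpb : p - b = c := by omega
    rw [hpb]
    subst hc
    ring
  have hub : M ≤ a + 1 :=
    hMmin (a+1) (by omega) ⟨a+d, by omega, p-b, by omega, hwit⟩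
  obtain ⟨n, hn, i, hi, heq⟩ := hMrel
  have heq' : M * (a*p+b+p*d) = n*(a*p+b) + (a*p+b+i*d) := by
    rw [hm p, hm 0, hm i] at heq
    simpa using heq
  obtain ⟨s, hs1, hs2, hs3⟩ := key_lemma p d a b M n i hp hd hgcd' hMpos hi heq'
  have hlb : a + 1 ≤ M := by
    by_contra h
    push_neg at h
    have h4 : 1*(a*p+b) ≤ s*(a*p+b) := Nat.mul_le_mul_right _ hs1
    have h5 : M*p ≤ a*p := Nat.mul_le_mul_right _ (by omega)
    have h6 : 1*(a*p+b) = a*p+b := one_mul _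
    linarith
  have hM1 : M = a + 1 := le_antisymm hub hlb
  refine ⟨hM1, ?_⟩
  intro n hn i hi heq
  have heq' : (a+1) * (a*p+b+p*d) = n*(a*p+b) + (a*p+b+i*d) := by
    rw [hm p, hm 0, hm i, hM1] at heq
    simpa using heq
  obtain ⟨s, hs1, hs2, hs3⟩ := key_lemma p d a b (a+1) n i hp hd hgcd' (by omega) hi heq'
  have hap : p ≤ a * p := Nat.le_mul_of_pos_left p ha
  have hap1 : (a+1)*p = a*p + p := by ring
  have hseq : s = 1 := by
    by_contra h
    have h2 : 2 ≤ s := by omega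
    have h4 : 2*(a*p+b) ≤ s*(a*p+b) := Nat.mul_le_mul_right _ h2
    have h6 : 2*(a*p+b) = a*p + a*p + b + b := by ring
    linarith
  subst hseq
  rw [one_mul, hap1] at hs3
  have hbi : b + i = p := by
    have := Nat.add_left_cancel (by linarith [hs3] : a*p + (b + i) = a*p + p)
    omega
  constructor
  · omega
  · omega
end

section
/- Suppose m, n are integers with m, n ≥ 1 and i is an integer with 0 ≤ i < p such that m·m_p = n·m_0 + m_i. Then m_0 divides m·p − i, the quotient is at least 1, and consequently m ≥ a + 1. -/
/-- If `M, n ≥ 1` and `0 ≤ i < p` satisfy `M·m_p = n·m_0 + m_i`, then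
`m_0` divides `M·p − i`, the quotient is at least `1`, and consequently `M ≥ a + 1`. -/
theorem divisibility_from_relation
    (p d a b : ℕ) (hp : 2 ≤ p) (hd : 1 ≤ d) (ha : 1 ≤ a) (hb1 : 1 ≤ b) (hbp : b ≤ p)
    (m : ℕ → ℕ) (hm : ∀ i, m i = a * p + b + i * d)
    (hgcd : Nat.gcd (m 0) d = 1)
    (hmin : ∀ i ≤ p, m i ∉ AddSubmonoid.closure {x : ℕ | ∃ j ≤ p, j ≠ i ∧ x = m j})
    (M n i : ℕ) (hM : 1 ≤ M) (hn : 1 ≤ n) (hi : i < p)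
    (hrel : M * m p = n * m 0 + m i) :
    m 0 ∣ (M * p - i) ∧ 1 ≤ (M * p - i) / m 0 ∧ a + 1 ≤ M := by
  have h0 : m 0 = a * p + b := by simp [hm]
  have hpi : i ≤ M * p := le_trans hi.le (le_trans (Nat.le_mul_of_pos_left p hM) le_rfl)
  have hip : m i = a * p + b + i * d := hm i
  have hpp : m p = a * p + b + p * d := hm p
  have hkey : ((M : ℤ) * p - i) * d = ((n : ℤ) + 1 - M) * (m 0) := by
    have : (M : ℤ) * (m p) = n * (m 0) + m i := by exact_mod_cast hrel
    rw [h0, hip, hpp] at this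
    rw [h0]
    push_cast at this ⊢
    linarith
  have hdvdZ : ((m 0 : ℤ)) ∣ ((M : ℤ) * p - i) * d := ⟨(n : ℤ) + 1 - M, by linarith [hkey]⟩
  have hcop : IsCoprime (m 0 : ℤ) (d : ℤ) := by
    rw [Int.isCoprime_iff_gcd_eq_one]
    exact_mod_cast hgcd
  have hdvdZ' : ((m 0 : ℤ)) ∣ ((M : ℤ) * p - i) := hcop.dvd_of_dvd_mul_right hdvdZ
  have hdvd : m 0 ∣ M * p - i := by
    have : ((m 0 : ℤ)) ∣ ((M * p - i : ℕ) : ℤ) := by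
      rwa [Nat.cast_sub hpi, Nat.cast_mul]
    exact_mod_cast this
  have hpos : 0 < M * p - i := by
    have : i < M * p := lt_of_lt_of_le hi (Nat.le_mul_of_pos_left p hM)
    omega
  have hle : m 0 ≤ M * p - i := Nat.le_of_dvd hpos hdvd
  have hm0pos : 0 < m 0 := by omega
  refine ⟨hdvd, (Nat.one_le_div_iff hm0pos).2 hle, ?_⟩
  by_contra h
  push_neg at h
  have hMa : M ≤ a := by omega
  have : M * p ≤ a * p := Nat.mul_le_mul_right p hMa
  omega
end

section
/- Let l ∈ {0, p}, let m, n be non-negative integers with m ≠ n, and let i, j ∈ {0,…,p} with i ≠ j. Then n·m_l + m_i ≠ m·m_l + m_j. -/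
/-- For `l ∈ {0, p}`, non-negative integers `M ≠ N`, and `i ≠ j` in `{0,…,p}`,
one has `N·m_l + m_i ≠ M·m_l + m_j`. -/
theorem weights_distinct
    (p d a b : ℕ) (hp : 2 ≤ p) (hd : 1 ≤ d) (ha : 1 ≤ a) (hb1 : 1 ≤ b) (hbp : b ≤ p)
    (m : ℕ → ℕ) (hm : ∀ i, m i = a * p + b + i * d)
    (hgcd : Nat.gcd (m 0) d = 1)
    (hmin : ∀ i ≤ p, m i ∉ AddSubmonoid.closure {x : ℕ | ∃ j ≤ p, j ≠ i ∧ x = m j})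
    (l M N i j : ℕ) (hl : l = 0 ∨ l = p) (hMN : M ≠ N)
    (hi : i ≤ p) (hj : j ≤ p) (hij : i ≠ j) :
    N * m l + m i ≠ M * m l + m j := by
  intro h
  have hml : l ≤ p := by rcases hl with h' | h' <;> omega
  have hpos : ∀ k, 1 ≤ m k := by
    intro k; rw [hm k]; nlinarith
  rcases Nat.lt_or_ge M N with hlt | hge
  · have key : m j = (N - M) * m l + m i := by
      have := Nat.sub_add_cancel hlt.le
      nlinarith [Nat.sub_add_cancel hlt.le]
    by_cases hlj : l = j
    · have h1 : 1 ≤ N - M := by omega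
      have h2 : m l ≤ (N - M) * m l := Nat.le_mul_of_pos_left _ (by omega)
      have := hpos i
      rw [hlj] at h2 key
      omega
    · have mem : (N - M) * m l + m i ∈
          AddSubmonoid.closure {x : ℕ | ∃ k ≤ p, k ≠ j ∧ x = m k} := by
        have h1 : m l ∈ {x : ℕ | ∃ k ≤ p, k ≠ j ∧ x = m k} := ⟨l, hml, hlj, rfl⟩
        have h2 : m i ∈ {x : ℕ | ∃ k ≤ p, k ≠ j ∧ x = m k} := ⟨i, hi, hij, rfl⟩
        apply AddSubmonoid.add_mem
        · simpa using nsmul_mem (AddSubmonoid.subset_closure h1) (N - M)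
        · exact AddSubmonoid.subset_closure h2
      exact hmin j hj (key ▸ mem)
  · have hlt : N < M := by omega
    have key : m i = (M - N) * m l + m j := by
      nlinarith [Nat.sub_add_cancel hlt.le]
    by_cases hli : l = i
    · have h1 : 1 ≤ M - N := by omega
      have h2 : m l ≤ (M - N) * m l := Nat.le_mul_of_pos_left _ (by omega)
      have := hpos j
      rw [hli] at h2 key
      omega
    · have mem : (M - N) * m l + m j ∈
          AddSubmonoid.closure {x : ℕ | ∃ k ≤ p, k ≠ i ∧ x = m k} := by
        have h1 : m l ∈ {x : ℕ | ∃ k ≤ p, k ≠ i ∧ x = m k} := ⟨l, hml, hli, rfl⟩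
        have h2 : m j ∈ {x : ℕ | ∃ k ≤ p, k ≠ i ∧ x = m k} := ⟨j, hj, Ne.symm hij, rfl⟩
        apply AddSubmonoid.add_mem
        · simpa using nsmul_mem (AddSubmonoid.subset_closure h1) (M - N)
        · exact AddSubmonoid.subset_closure h2
      exact hmin i hi (key ▸ mem)
end

section
/- Let m ≥ 0 and j ∈ {1,…,p−1}. If either (i ∈ {1,…,p−1} and 1 ≤ n ≤ a−1) or (i ∈ {1,…,b−1} and 1 ≤ n ≤ a), then n·m_p + m_i ≠ m·m_0 + m_j; equivalently, the binomial X_0^m·X_j − X_p^n·X_i does not belong to ℘. -/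
open MvPolynomial
open Fin.NatCast

/-- The defining ideal `℘` of the monomial curve: the kernel of the `K`-algebra map
`K[X_0,…,X_p] → K[T]`, `X_i ↦ T^{m_i}`. -/
noncomputable def curveIdeal (K : Type*) [Field K] (p : ℕ) (m : ℕ → ℕ) :
    Ideal (MvPolynomial (Fin (p + 1)) K) :=
  RingHom.ker (MvPolynomial.aeval (R := K)
    (fun k : Fin (p + 1) => (Polynomial.X : Polynomial K) ^ m (k : ℕ))).toRingHom

/-- For `m ≥ 0`, `j ∈ {1,…,p−1}`, and either (`i ∈ {1,…,p−1}` and `1 ≤ n ≤ a−1`)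
or (`i ∈ {1,…,b−1}` and `1 ≤ n ≤ a`), one has `n·m_p + m_i ≠ m·m_0 + m_j`; equivalently the
binomial `X_0^m·X_j − X_p^n·X_i` does not belong to `℘`. -/
theorem binomial_not_in_curveIdeal
    (K : Type*) [Field K]
    (p d a b : ℕ) (hp : 2 ≤ p) (hd : 1 ≤ d) (ha : 1 ≤ a) (hb1 : 1 ≤ b) (hbp : b ≤ p)
    (m : ℕ → ℕ) (hm : ∀ i, m i = a * p + b + i * d)
    (hgcd : Nat.gcd (m 0) d = 1)
    (hmin : ∀ i ≤ p, m i ∉ AddSubmonoid.closure {x : ℕ | ∃ j ≤ p, j ≠ i ∧ x = m j})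
    (M N i j : ℕ) (hj1 : 1 ≤ j) (hjp : j < p)
    (hcase : (1 ≤ i ∧ i < p ∧ 1 ≤ N ∧ N < a) ∨ (1 ≤ i ∧ i < b ∧ 1 ≤ N ∧ N ≤ a)) :
    N * m p + m i ≠ M * m 0 + m j ∧
      (X (0 : Fin (p + 1))) ^ M * X ((j : ℕ) : Fin (p + 1)) -
        (X ((p : ℕ) : Fin (p + 1))) ^ N * X ((i : ℕ) : Fin (p + 1)) ∉ curveIdeal K p m := by
  have hi1 : 1 ≤ i := hcase.elim (fun h => h.1) (fun h => h.1)
  have hN1 : 1 ≤ N := hcase.elim (fun h => h.2.2.1) (fun h => h.2.2.1)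
  have hip : i < p := hcase.elim (fun h => h.2.1) (fun h => lt_of_lt_of_le h.2.1 hbp)
  have hm0 : m 0 = a * p + b := by rw [hm]; ring
  -- key bound
  have hkey : N * p + i < a * p + b + j := by
    rcases hcase with ⟨hi1, hip, hN1, hNa⟩ | ⟨hi1, hib, hN1, hNa⟩
    · have h1 : (N + 1) * p ≤ a * p := mul_le_mul_left (Nat.succ_le_of_lt hNa) p
      nlinarith
    · have h1 : N * p ≤ a * p := mul_le_mul_left hNa p
      linarith
  have hne : N * m p + m i ≠ M * m 0 + m j := by
    intro h
    rw [hm p, hm i, hm j, hm 0] at h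
    have e : ((M : ℤ) - N) * ((a : ℤ) * p + b) = ((N : ℤ) * p + i - j) * d := by
      zify at h
      linear_combination -h
    have hpos : (0 : ℤ) < (N : ℤ) * p + i - j := by
      have h2 : p ≤ N * p := Nat.le_mul_of_pos_left p hN1
      have h3 : (p : ℤ) ≤ (N : ℤ) * p := by exact_mod_cast h2
      have h4 : (j : ℤ) < p := by exact_mod_cast hjp
      have h5 : (1 : ℤ) ≤ i := by exact_mod_cast hi1
      linarith
    have hc0 : (0 : ℤ) < (a : ℤ) * p + b := by positivity
    have hd0 : (0 : ℤ) < d := by exact_mod_cast hd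
    have hMN : (N : ℤ) < M := by nlinarith
    have hco : IsCoprime ((a : ℤ) * p + b) (d : ℤ) := by
      rw [Int.isCoprime_iff_gcd_eq_one]
      have : ((a : ℤ) * p + b) = ((a * p + b : ℕ) : ℤ) := by push_cast; ring
      rw [this, Int.gcd_natCast_natCast, ← hm0, hgcd]
    have hdvd : ((a : ℤ) * p + b) ∣ ((N : ℤ) * p + i - j) := by
      apply hco.dvd_of_dvd_mul_right
      exact ⟨(M : ℤ) - N, by linarith [e]⟩
    have hle : ((a : ℤ) * p + b) ≤ (N : ℤ) * p + i - j := Int.le_of_dvd hpos hdvd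
    have hkey' : (N : ℤ) * p + i < (a : ℤ) * p + b + j := by exact_mod_cast hkey
    linarith
  refine ⟨hne, fun hmem => ?_⟩
  rw [curveIdeal, RingHom.mem_ker] at hmem
  have hj' : (((j : ℕ) : Fin (p + 1)) : ℕ) = j := Fin.val_cast_of_lt (by omega)
  have hi' : (((i : ℕ) : Fin (p + 1)) : ℕ) = i := Fin.val_cast_of_lt (by omega)
  have hp' : (((p : ℕ) : Fin (p + 1)) : ℕ) = p := Fin.val_cast_of_lt (by omega)
  simp only [AlgHom.toRingHom_eq_coe, RingHom.coe_coe, map_sub, map_mul, map_pow,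
    aeval_X, hj', hi', hp'] at hmem
  rw [sub_eq_zero, ← pow_mul, ← pow_mul, ← pow_add, ← pow_add] at hmem
  have h2 := congrArg Polynomial.natDegree hmem
  simp only [Polynomial.natDegree_X_pow] at h2
  apply hne
  have h3 : (0 : Fin (p + 1)).val = 0 := rfl
  rw [h3] at h2
  linarith [h2, Nat.mul_comm (m 0) M, Nat.mul_comm (m p) N]
end

section
/- Let m ≥ 0 and n ∈ {0,…,a}, and let g = X_0^m·X_p^n. Then g − f ∉ ℘ (equivalently m·m_0 + n·m_p ≠ ω(f)) for each of the following monomials f: (1) f = X_p^l·X_i with 1 ≤ l ≤ a−1 and i ∈ {1,…,p−1}; (2) f = X_0^l·X_i with l ≥ 0 and i ∈ {1,…,p−1}; (3) f = X_p^l·X_i with 1 ≤ l ≤ a and i ∈ {1,…,b−1}. -/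
open MvPolynomial
open Fin.NatCast

lemma core_false (p d a b M N l i e : ℕ) (ha : 1 ≤ a) (hb1 : 1 ≤ b) (hN : N ≤ a)
    (hgcd : Nat.gcd (a * p + b) d = 1) (hi1 : 1 ≤ i) (hip : i < p)
    (hsmall : e * p + i < a * p + b)
    (hz : ((a : ℤ) * p + b) * ((M : ℤ) + N - l - 1) = ((e : ℤ) * p + i - N * p) * d) :
    False := by
  have hcop : IsCoprime ((a : ℤ) * p + b) (d : ℤ) := by
    rw [Int.isCoprime_iff_gcd_eq_one]
    have h1 : ((a * p + b : ℕ) : ℤ) = (a : ℤ) * p + b := by push_cast; ring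
    rw [← h1, Int.gcd_natCast_natCast]
    exact hgcd
  have hdvd : ((a : ℤ) * p + b) ∣ ((e : ℤ) * p + i - N * p) :=
    hcop.dvd_of_dvd_mul_right ⟨(M : ℤ) + N - l - 1, hz.symm⟩
  have hposm0 : (0 : ℤ) < (a : ℤ) * p + b := by
    have h1 : (0 : ℤ) ≤ (a : ℤ) * p := by positivity
    have h2 : (1 : ℤ) ≤ b := by exact_mod_cast hb1
    linarith
  have hup : (e : ℤ) * p + i - N * p < (a : ℤ) * p + b := by
    have h1 : ((e * p + i : ℕ) : ℤ) < ((a * p + b : ℕ) : ℤ) := by exact_mod_cast hsmall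
    push_cast at h1
    have h2 : (0 : ℤ) ≤ (N : ℤ) * p := by positivity
    linarith
  have hlo : -((a : ℤ) * p + b) < (e : ℤ) * p + i - N * p := by
    have hNp : (N : ℤ) * p ≤ (a : ℤ) * p := by
      have h1 : (N : ℤ) ≤ a := by exact_mod_cast hN
      exact mul_le_mul_of_nonneg_right h1 (by positivity)
    have h3 : (0 : ℤ) ≤ (e : ℤ) * p := by positivity
    have h4 : (1 : ℤ) ≤ i := by exact_mod_cast hi1
    have h5 : (1 : ℤ) ≤ b := by exact_mod_cast hb1
    linarith
  obtain ⟨c, hc⟩ := hdvd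
  have hc0 : c = 0 := by
    rcases lt_trichotomy c 0 with h' | h' | h'
    · have hc1 : c ≤ -1 := by omega
      have h2 : ((a : ℤ) * p + b) * c ≤ ((a : ℤ) * p + b) * (-1) :=
        mul_le_mul_of_nonneg_left hc1 hposm0.le
      linarith
    · exact h'
    · have hc1 : 1 ≤ c := h'
      have h2 : (a : ℤ) * p + b ≤ ((a : ℤ) * p + b) * c :=
        le_mul_of_one_le_right hposm0.le hc1
      linarith
  have ht : (e : ℤ) * p + i - N * p = 0 := by rw [hc, hc0, mul_zero]
  have hpd : (p : ℤ) ∣ (i : ℤ) := ⟨(N : ℤ) - e, by linarith⟩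
  have hple := Int.le_of_dvd (by exact_mod_cast hi1) hpd
  have : p ≤ i := by exact_mod_cast hple
  omega

lemma key1 (p d a b M N l i : ℕ) (ha : 1 ≤ a) (hb1 : 1 ≤ b) (hN : N ≤ a)
    (hgcd : Nat.gcd (a * p + b) d = 1) (hi1 : 1 ≤ i) (hip : i < p)
    (hsmall : l * p + i < a * p + b)
    (m : ℕ → ℕ) (hm : ∀ j, m j = a * p + b + j * d) :
    M * m 0 + N * m p ≠ l * m p + m i := by
  intro h
  rw [hm 0, hm p, hm i] at h
  have hz : (M : ℤ) * (a * p + b + 0 * d) + N * (a * p + b + p * d)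
      = l * (a * p + b + p * d) + (a * p + b + i * d) := by exact_mod_cast h
  exact core_false p d a b M N l i l ha hb1 hN hgcd hi1 hip hsmall
    (by linear_combination hz)

lemma key2 (p d a b M N l i : ℕ) (ha : 1 ≤ a) (hb1 : 1 ≤ b) (hN : N ≤ a)
    (hgcd : Nat.gcd (a * p + b) d = 1) (hi1 : 1 ≤ i) (hip : i < p)
    (m : ℕ → ℕ) (hm : ∀ j, m j = a * p + b + j * d) :
    M * m 0 + N * m p ≠ l * m 0 + m i := by
  intro h
  rw [hm 0, hm p, hm i] at h
  have hz : (M : ℤ) * (a * p + b + 0 * d) + N * (a * p + b + p * d)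
      = l * (a * p + b + 0 * d) + (a * p + b + i * d) := by exact_mod_cast h
  have hsmall : 0 * p + i < a * p + b := by
    have : p ≤ a * p := Nat.le_mul_of_pos_left p ha
    omega
  exact core_false p d a b M N l i 0 ha hb1 hN hgcd hi1 hip hsmall
    (by linear_combination hz)

lemma not_mem_of_ne (K : Type*) [Field K] (p : ℕ) (m : ℕ → ℕ)
    (u v w z : Fin (p + 1)) (M N l : ℕ)
    (h : M * m (u : ℕ) + N * m (v : ℕ) ≠ l * m (w : ℕ) + m (z : ℕ)) :
    (X u) ^ M * (X v) ^ N - (X w) ^ l * X z ∉ curveIdeal K p m := by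
  intro hmem
  rw [curveIdeal, RingHom.mem_ker] at hmem
  simp only [AlgHom.toRingHom_eq_coe, RingHom.coe_coe, map_sub, map_mul, map_pow,
    aeval_X] at hmem
  simp only [← pow_mul, ← pow_add, sub_eq_zero] at hmem
  apply h
  have hdeg := congrArg Polynomial.natDegree hmem
  rw [Polynomial.natDegree_X_pow, Polynomial.natDegree_X_pow] at hdeg
  rw [mul_comm (m (u : ℕ)), mul_comm (m (v : ℕ)), mul_comm (m (w : ℕ))] at hdeg
  exact hdeg

theorem monomial_differences_not_in_curveIdeal
    (K : Type*) [Field K]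
    (p d a b : ℕ) (hp : 2 ≤ p) (hd : 1 ≤ d) (ha : 1 ≤ a) (hb1 : 1 ≤ b) (hbp : b ≤ p)
    (m : ℕ → ℕ) (hm : ∀ i, m i = a * p + b + i * d)
    (hgcd : Nat.gcd (m 0) d = 1)
    (hmin : ∀ i ≤ p, m i ∉ AddSubmonoid.closure {x : ℕ | ∃ j ≤ p, j ≠ i ∧ x = m j})
    (M N : ℕ) (hN : N ≤ a) :
    (∀ l i : ℕ, 1 ≤ l → l < a → 1 ≤ i → i < p →
      M * m 0 + N * m p ≠ l * m p + m i ∧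
        (X (0 : Fin (p + 1))) ^ M * (X ((p : ℕ) : Fin (p + 1))) ^ N -
          (X ((p : ℕ) : Fin (p + 1))) ^ l * X ((i : ℕ) : Fin (p + 1)) ∉ curveIdeal K p m) ∧
    (∀ l i : ℕ, 1 ≤ i → i < p →
      M * m 0 + N * m p ≠ l * m 0 + m i ∧
        (X (0 : Fin (p + 1))) ^ M * (X ((p : ℕ) : Fin (p + 1))) ^ N -
          (X (0 : Fin (p + 1))) ^ l * X ((i : ℕ) : Fin (p + 1)) ∉ curveIdeal K p m) ∧
    (∀ l i : ℕ, 1 ≤ l → l ≤ a → 1 ≤ i → i < b →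
      M * m 0 + N * m p ≠ l * m p + m i ∧
        (X (0 : Fin (p + 1))) ^ M * (X ((p : ℕ) : Fin (p + 1))) ^ N -
          (X ((p : ℕ) : Fin (p + 1))) ^ l * X ((i : ℕ) : Fin (p + 1)) ∉ curveIdeal K p m) := by
  have hgcd' : Nat.gcd (a * p + b) d = 1 := by
    rw [hm 0] at hgcd; simpa using hgcd
  have h0v : ((0 : Fin (p + 1)) : ℕ) = 0 := rfl
  have hpv : (((p : ℕ) : Fin (p + 1)) : ℕ) = p := by
    rw [Fin.val_natCast]; exact Nat.mod_eq_of_lt (Nat.lt_succ_self p)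
  have hiv : ∀ i : ℕ, i < p → (((i : ℕ) : Fin (p + 1)) : ℕ) = i := fun i hi => by
    rw [Fin.val_natCast]; exact Nat.mod_eq_of_lt (by omega)
  refine ⟨fun l i hl1 hla hi1 hip => ?_, fun l i hi1 hip => ?_,
    fun l i hl1 hla hi1 hib => ?_⟩
  · have hsmall : l * p + i < a * p + b := by
      have h1 : (l + 1) * p ≤ a * p := Nat.mul_le_mul_right p (by omega)
      have h2 : (l + 1) * p = l * p + p := by ring
      omega
    have hne := key1 p d a b M N l i ha hb1 hN hgcd' hi1 hip hsmall m hm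
    refine ⟨hne, not_mem_of_ne K p m _ _ _ _ M N l ?_⟩
    rw [h0v, hpv, hiv i hip]; exact hne
  · have hne := key2 p d a b M N l i ha hb1 hN hgcd' hi1 hip m hm
    refine ⟨hne, not_mem_of_ne K p m _ _ _ _ M N l ?_⟩
    rw [h0v, hpv, hiv i hip]; exact hne
  · have hip : i < p := by omega
    have hsmall : l * p + i < a * p + b := by
      have h1 : l * p ≤ a * p := Nat.mul_le_mul_right p hla
      omega
    have hne := key1 p d a b M N l i ha hb1 hN hgcd' hi1 hip hsmall m hm
    refine ⟨hne, not_mem_of_ne K p m _ _ _ _ M N l ?_⟩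
    rw [h0v, hpv, hiv i hip]; exact hne
end

section
/- The ideal ℘ equals the ideal of R generated by the set 𝒢' = {φ(i,j) : 1 ≤ i ≤ j ≤ p−1} ∪ {ψ(b,i) : 0 ≤ i ≤ p−b}. -/
open MvPolynomial
open Fin.NatCast

/-- `ε(i,j) = i + j` if `i + j < p`, and `ε(i,j) = p` if `i + j ≥ p`. -/
def eps (p i j : ℕ) : ℕ := if i + j < p then i + j else p

/-- The binomial `φ(i,j) = X_i·X_j − X_{ε(i,j)}·X_{i+j−ε(i,j)}`. -/
noncomputable def phi (K : Type*) [Field K] (p i j : ℕ) : MvPolynomial (Fin (p + 1)) K :=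
  X ((i : ℕ) : Fin (p + 1)) * X ((j : ℕ) : Fin (p + 1)) -
    X ((eps p i j : ℕ) : Fin (p + 1)) * X ((i + j - eps p i j : ℕ) : Fin (p + 1))

/-- The binomial `ψ(b,i) = X_{b+i}·X_p^a − X_i·X_0^{a+d}`. -/
noncomputable def psi (K : Type*) [Field K] (p a b d i : ℕ) : MvPolynomial (Fin (p + 1)) K :=
  X ((b + i : ℕ) : Fin (p + 1)) * (X ((p : ℕ) : Fin (p + 1))) ^ a -
    X ((i : ℕ) : Fin (p + 1)) * (X (0 : Fin (p + 1))) ^ (a + d)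

/-- The set `𝒢' = {φ(i,j) : 1 ≤ i ≤ j ≤ p−1} ∪ {ψ(b,i) : 0 ≤ i ≤ p−b}`. -/
noncomputable def Gset (K : Type*) [Field K] (p a b d : ℕ) :
    Set (MvPolynomial (Fin (p + 1)) K) :=
  {f | ∃ i j : ℕ, 1 ≤ i ∧ i ≤ j ∧ j < p ∧ f = phi K p i j} ∪
    {f | ∃ i : ℕ, i ≤ p - b ∧ f = psi K p a b d i}

noncomputable def Xc (K : Type*) [Field K] (p k : ℕ) : MvPolynomial (Fin (p + 1)) K :=
  X ((k : ℕ) : Fin (p + 1))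

lemma phi_eq (K : Type*) [Field K] (p i j : ℕ) :
    phi K p i j = Xc K p i * Xc K p j - Xc K p (eps p i j) * Xc K p (i + j - eps p i j) := rfl

lemma psi_eq (K : Type*) [Field K] (p a b d i : ℕ) :
    psi K p a b d i = Xc K p (b + i) * Xc K p p ^ a - Xc K p i * Xc K p 0 ^ (a + d) := by
  unfold psi Xc; norm_num

lemma phi_comm (K : Type*) [Field K] (p i j : ℕ) : phi K p i j = phi K p j i := by
  unfold phi eps
  rw [Nat.add_comm j i, mul_comm (X ((i : ℕ) : Fin (p+1)))]

lemma phi_mem (K : Type*) [Field K] (p a b d i j : ℕ) (h1 : 1 ≤ i) (h2 : 1 ≤ j)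
    (hi : i < p) (hj : j < p) : phi K p i j ∈ Ideal.span (Gset K p a b d) := by
  rcases le_total i j with h | h
  · exact Ideal.subset_span (Or.inl ⟨i, j, h1, h, hj, rfl⟩)
  · rw [phi_comm]
    exact Ideal.subset_span (Or.inl ⟨j, i, h2, h, hi, rfl⟩)

lemma psi_mem (K : Type*) [Field K] (p a b d i : ℕ) (h : i ≤ p - b) :
    psi K p a b d i ∈ Ideal.span (Gset K p a b d) :=
  Ideal.subset_span (Or.inr ⟨i, h, rfl⟩)
def GoodT (p a b : ℕ) (t : ℕ × ℕ × ℕ) : Prop :=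
  1 ≤ t.2.1 ∧ t.2.1 ≤ p ∧ t.2.2 ≤ a ∧ (t.2.1 < b ∨ t.2.2 < a)

noncomputable def sFam (K : Type*) [Field K] (p a b d : ℕ) :
    (ℕ ⊕ {t : ℕ × ℕ × ℕ // GoodT p a b t}) →
      (MvPolynomial (Fin (p + 1)) K ⧸ Ideal.span (Gset K p a b d))
  | .inl u => Ideal.Quotient.mk _ (Xc K p 0 ^ u)
  | .inr t => Ideal.Quotient.mk _ (Xc K p 0 ^ t.1.1 * Xc K p t.1.2.1 * Xc K p p ^ t.1.2.2)

lemma claimC (K : Type*) [Field K] (p a b d : ℕ) (hp : 2 ≤ p) (ha : 1 ≤ a)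
    (hb1 : 1 ≤ b) (hbp : b ≤ p) (v : ℕ) : ∀ u j : ℕ, j ≤ p →
    Ideal.Quotient.mk (Ideal.span (Gset K p a b d))
      (Xc K p 0 ^ u * Xc K p j * Xc K p p ^ v)
      ∈ Submodule.span K (Set.range (sFam K p a b d)) := by
  induction v using Nat.strong_induction_on with
  | _ v ih =>
    intro u j hj
    by_cases hj0 : j = 0
    · subst hj0
      rcases Nat.eq_zero_or_pos v with hv | hv
      · subst hv
        have he : Xc K p 0 ^ u * Xc K p 0 * Xc K p p ^ 0 = Xc K p 0 ^ (u + 1) := by ring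
        rw [he]
        exact Submodule.subset_span ⟨Sum.inl (u + 1), rfl⟩
      · obtain ⟨w, rfl⟩ : ∃ w, v = w + 1 := ⟨v - 1, by omega⟩
        have he : Xc K p 0 ^ u * Xc K p 0 * Xc K p p ^ (w + 1)
            = Xc K p 0 ^ (u + 1) * Xc K p p * Xc K p p ^ w := by ring
        rw [he]
        exact ih w (by omega) (u + 1) p le_rfl
    · by_cases hgood : v ≤ a ∧ (j < b ∨ v < a)
      · have hG : GoodT p a b (u, j, v) := by
          exact ⟨Nat.one_le_iff_ne_zero.mpr hj0, hj, hgood.1, hgood.2⟩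
        exact Submodule.subset_span ⟨Sum.inr ⟨(u, j, v), hG⟩, rfl⟩
      · by_cases hcase : b ≤ j
        · have hav : a ≤ v := by
            by_contra h
            exact hgood ⟨by omega, Or.inr (by omega)⟩
          obtain ⟨i, rfl⟩ : ∃ i, j = b + i := ⟨j - b, by omega⟩
          obtain ⟨w, rfl⟩ : ∃ w, v = w + a := ⟨v - a, by omega⟩
          have hkey : Ideal.Quotient.mk (Ideal.span (Gset K p a b d))
              (Xc K p 0 ^ u * Xc K p (b + i) * Xc K p p ^ (w + a))
              = Ideal.Quotient.mk (Ideal.span (Gset K p a b d))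
              (Xc K p 0 ^ (u + a + d) * Xc K p i * Xc K p p ^ w) := by
            apply Ideal.Quotient.eq.mpr
            have h2 : Xc K p 0 ^ u * Xc K p (b + i) * Xc K p p ^ (w + a)
                - Xc K p 0 ^ (u + a + d) * Xc K p i * Xc K p p ^ w
                = (Xc K p 0 ^ u * Xc K p p ^ w) * psi K p a b d i := by
              rw [psi_eq]; ring
            rw [h2]
            exact Ideal.mul_mem_left _ _ (psi_mem K p a b d i (by omega))
          rw [hkey]
          exact ih w (by omega) (u + a + d) i (by omega)
        · have hva : a + 1 ≤ v := by
            by_contra h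
            exact hgood ⟨by omega, Or.inl (by omega)⟩
          obtain ⟨w, rfl⟩ : ∃ w, v = w + (a + 1) := ⟨v - (a + 1), by omega⟩
          by_cases hbe : b = p
          · have hpsi0 : psi K p a b d 0 = Xc K p p * Xc K p p ^ a
                - Xc K p 0 * Xc K p 0 ^ (a + d) := by
              rw [psi_eq, show b + 0 = p by omega]
            have hkey : Ideal.Quotient.mk (Ideal.span (Gset K p a b d))
                (Xc K p 0 ^ u * Xc K p j * Xc K p p ^ (w + (a + 1)))
                = Ideal.Quotient.mk (Ideal.span (Gset K p a b d))
                (Xc K p 0 ^ (u + a + d + 1) * Xc K p j * Xc K p p ^ w) := by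
              apply Ideal.Quotient.eq.mpr
              have h2 : Xc K p 0 ^ u * Xc K p j * Xc K p p ^ (w + (a + 1))
                  - Xc K p 0 ^ (u + a + d + 1) * Xc K p j * Xc K p p ^ w
                  = (Xc K p 0 ^ u * Xc K p j * Xc K p p ^ w) * psi K p a b d 0 := by
                rw [hpsi0]; ring
              rw [h2]
              exact Ideal.mul_mem_left _ _ (psi_mem K p a b d 0 (by omega))
            rw [hkey]
            exact ih w (by omega) (u + a + d + 1) j hj
          · -- b < p
            have hblt : b < p := by omega
            have hjb : j < b := by omega
            have hpsi' : psi K p a b d (p - b) = Xc K p p * Xc K p p ^ a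
                - Xc K p (p - b) * Xc K p 0 ^ (a + d) := by
              rw [psi_eq, Nat.add_sub_cancel' hbp]
            have hphi' : phi K p j (p - b) = Xc K p j * Xc K p (p - b)
                - Xc K p (j + p - b) * Xc K p 0 := by
              rw [phi_eq]
              have he : eps p j (p - b) = j + (p - b) := by unfold eps; split <;> omega
              rw [he]
              have h0 : j + (p - b) - (j + (p - b)) = 0 := by omega
              have h1 : j + (p - b) = j + p - b := by omega
              rw [h0, h1]
            have hkey : Ideal.Quotient.mk (Ideal.span (Gset K p a b d))
                (Xc K p 0 ^ u * Xc K p j * Xc K p p ^ (w + (a + 1)))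
                = Ideal.Quotient.mk (Ideal.span (Gset K p a b d))
                (Xc K p 0 ^ (u + a + d + 1) * Xc K p (j + p - b) * Xc K p p ^ w) := by
              apply Ideal.Quotient.eq.mpr
              have h2 : Xc K p 0 ^ u * Xc K p j * Xc K p p ^ (w + (a + 1))
                  - Xc K p 0 ^ (u + a + d + 1) * Xc K p (j + p - b) * Xc K p p ^ w
                  = (Xc K p 0 ^ u * Xc K p j * Xc K p p ^ w) * psi K p a b d (p - b)
                    + (Xc K p 0 ^ (u + a + d) * Xc K p p ^ w) * phi K p j (p - b) := by
                rw [hpsi', hphi']; ring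
              rw [h2]
              exact Ideal.add_mem _
                (Ideal.mul_mem_left _ _ (psi_mem K p a b d (p - b) le_rfl))
                (Ideal.mul_mem_left _ _ (phi_mem K p a b d j (p - b)
                  (by omega) (by omega) (by omega) (by omega)))
            rw [hkey]
            exact ih w (by omega) (u + a + d + 1) (j + p - b) (by omega)
lemma mul_closure (K : Type*) [Field K] (p a b d : ℕ) (hp : 2 ≤ p) (ha : 1 ≤ a)
    (hb1 : 1 ≤ b) (hbp : b ≤ p) (i : Fin (p + 1))
    (q : MvPolynomial (Fin (p + 1)) K ⧸ Ideal.span (Gset K p a b d))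
    (hq : q ∈ Submodule.span K (Set.range (sFam K p a b d))) :
    q * Ideal.Quotient.mk _ (X i) ∈ Submodule.span K (Set.range (sFam K p a b d)) := by
  obtain ⟨k, hik⟩ : ∃ k, (i : ℕ) = k := ⟨i, rfl⟩
  have hXi : (X i : MvPolynomial (Fin (p + 1)) K) = Xc K p k := by
    unfold Xc; rw [← hik, Fin.cast_val_eq_self]
  have hk : k ≤ p := by have := i.isLt; omega
  refine Submodule.span_induction ?_ ?_ ?_ ?_ hq
  · rintro x ⟨t, rfl⟩
    rcases t with u | ⟨⟨u, j, v⟩, hG⟩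
    · show Ideal.Quotient.mk _ (Xc K p 0 ^ u) * Ideal.Quotient.mk _ (X i) ∈ _
      rw [← map_mul, hXi]
      have he : Xc K p 0 ^ u * Xc K p k = Xc K p 0 ^ u * Xc K p k * Xc K p p ^ 0 := by ring
      rw [he]
      exact claimC K p a b d hp ha hb1 hbp 0 u k hk
    · obtain ⟨hG1, hG2, hG3, hG4⟩ := hG
      replace hG1 : 1 ≤ j := hG1
      replace hG2 : j ≤ p := hG2
      replace hG3 : v ≤ a := hG3
      show Ideal.Quotient.mk _ (Xc K p 0 ^ u * Xc K p j * Xc K p p ^ v)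
        * Ideal.Quotient.mk _ (X i) ∈ _
      rw [← map_mul, hXi]
      by_cases hk0 : k = 0
      · subst hk0
        have he : Xc K p 0 ^ u * Xc K p j * Xc K p p ^ v * Xc K p 0
            = Xc K p 0 ^ (u + 1) * Xc K p j * Xc K p p ^ v := by ring
        rw [he]
        exact claimC K p a b d hp ha hb1 hbp v (u + 1) j hG2
      · by_cases hkp : k = p
        · have hXkp : Xc K p k = Xc K p p := by rw [hkp]
          rw [hXkp]
          have he : Xc K p 0 ^ u * Xc K p j * Xc K p p ^ v * Xc K p p
              = Xc K p 0 ^ u * Xc K p j * Xc K p p ^ (v + 1) := by ring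
          rw [he]
          exact claimC K p a b d hp ha hb1 hbp (v + 1) u j hG2
        · by_cases hjp : j = p
          · have hXjp : Xc K p j = Xc K p p := by rw [hjp]
            rw [hXjp]
            have he : Xc K p 0 ^ u * Xc K p p * Xc K p p ^ v * Xc K p k
                = Xc K p 0 ^ u * Xc K p k * Xc K p p ^ (v + 1) := by ring
            rw [he]
            exact claimC K p a b d hp ha hb1 hbp (v + 1) u k hk
          · -- 1 ≤ k ≤ p-1, 1 ≤ j ≤ p-1 : use phi
            have hphiI := phi_mem K p a b d k j (by omega) hG1 (by omega) (by omega)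
            have hkey : Ideal.Quotient.mk (Ideal.span (Gset K p a b d))
                (Xc K p 0 ^ u * Xc K p j * Xc K p p ^ v * Xc K p k)
                = Ideal.Quotient.mk (Ideal.span (Gset K p a b d))
                (Xc K p 0 ^ u * (Xc K p (eps p k j)
                  * Xc K p (k + j - eps p k j)) * Xc K p p ^ v) := by
              apply Ideal.Quotient.eq.mpr
              have h2 : Xc K p 0 ^ u * Xc K p j * Xc K p p ^ v * Xc K p k
                  - Xc K p 0 ^ u * (Xc K p (eps p k j)
                    * Xc K p (k + j - eps p k j)) * Xc K p p ^ v
                  = (Xc K p 0 ^ u * Xc K p p ^ v) * phi K p k j := by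
                rw [phi_eq]; ring
              rw [h2]
              exact Ideal.mul_mem_left _ _ hphiI
            rw [hkey]
            by_cases hsum : k + j < p
            · have he1 : eps p k j = k + j := by unfold eps; split <;> omega
              have he2 : k + j - eps p k j = 0 := by omega
              rw [he2, he1]
              have he : Xc K p 0 ^ u * (Xc K p (k + j) * Xc K p 0) * Xc K p p ^ v
                  = Xc K p 0 ^ (u + 1) * Xc K p (k + j) * Xc K p p ^ v := by ring
              rw [he]
              exact claimC K p a b d hp ha hb1 hbp v (u + 1) (k + j) (by omega)
            · have he1 : eps p k j = p := by unfold eps; split <;> omega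
              rw [he1]
              have he : Xc K p 0 ^ u * (Xc K p p * Xc K p (k + j - p)) * Xc K p p ^ v
                  = Xc K p 0 ^ u * Xc K p (k + j - p) * Xc K p p ^ (v + 1) := by ring
              rw [he]
              exact claimC K p a b d hp ha hb1 hbp (v + 1) u (k + j - p) (by omega)
  · rw [zero_mul]; exact Submodule.zero_mem _
  · intro x y _ _ hx hy
    rw [add_mul]; exact Submodule.add_mem _ hx hy
  · intro c x _ hx
    rw [smul_mul_assoc]; exact Submodule.smul_mem _ c hx

lemma span_sFam_top (K : Type*) [Field K] (p a b d : ℕ) (hp : 2 ≤ p) (ha : 1 ≤ a)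
    (hb1 : 1 ≤ b) (hbp : b ≤ p) :
    Submodule.span K (Set.range (sFam K p a b d)) = ⊤ := by
  rw [Submodule.eq_top_iff']
  intro q
  obtain ⟨f, rfl⟩ := Ideal.Quotient.mk_surjective q
  induction f using MvPolynomial.induction_on with
  | C r =>
    have h1 : Ideal.Quotient.mk (Ideal.span (Gset K p a b d)) (C r)
        = r • sFam K p a b d (Sum.inl 0) := by
      show _ = r • Ideal.Quotient.mk _ (Xc K p 0 ^ 0)
      rw [pow_zero]
      have h2 : (C r : MvPolynomial (Fin (p + 1)) K) = algebraMap K _ r := rfl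
      rw [h2, map_one, ← Algebra.algebraMap_eq_smul_one]
      exact Ideal.Quotient.mk_algebraMap K _ r
    rw [h1]
    exact Submodule.smul_mem _ r (Submodule.subset_span ⟨Sum.inl 0, rfl⟩)
  | add f g hf hg =>
    rw [RingHom.map_add]; exact Submodule.add_mem _ hf hg
  | mul_X f i hf =>
    rw [RingHom.map_mul]
    exact mul_closure K p a b d hp ha hb1 hbp i _ hf
lemma aeval_Xc (K : Type*) [Field K] (p : ℕ) (m : ℕ → ℕ) (k : ℕ) (hk : k ≤ p) :
    aeval (R := K) (fun t : Fin (p + 1) => (Polynomial.X : Polynomial K) ^ m (t : ℕ))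
      (Xc K p k) = Polynomial.X ^ m k := by
  unfold Xc
  rw [aeval_X, Fin.val_cast_of_lt (by omega)]

lemma Gset_ker (K : Type*) [Field K] (p d a b : ℕ) (hbp : b ≤ p)
    (m : ℕ → ℕ) (hm : ∀ i, m i = a * p + b + i * d) :
    ∀ g ∈ Gset K p a b d,
      aeval (R := K) (fun t : Fin (p + 1) => (Polynomial.X : Polynomial K) ^ m (t : ℕ)) g
        = 0 := by
  rintro g (⟨i, j, h1, h2, h3, rfl⟩ | ⟨i, hi, rfl⟩)
  · have heps1 : eps p i j ≤ p := by unfold eps; split <;> omega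
    have heps2 : i + j - eps p i j ≤ p := by unfold eps; split <;> omega
    have heps3 : eps p i j + (i + j - eps p i j) = i + j := by unfold eps; split <;> omega
    rw [phi_eq, map_sub, map_mul, map_mul, aeval_Xc K p m i (by omega),
      aeval_Xc K p m j (by omega), aeval_Xc K p m (eps p i j) heps1,
      aeval_Xc K p m (i + j - eps p i j) heps2, ← pow_add, ← pow_add]
    have h4 := congrArg (· * d) heps3
    simp only [add_mul] at h4
    have hexp : m i + m j = m (eps p i j) + m (i + j - eps p i j) := by
      simp only [hm]
      linarith
    rw [hexp, sub_self]
  · have hbi : b + i ≤ p := by omega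
    rw [psi_eq, map_sub, map_mul, map_mul, map_pow, map_pow, aeval_Xc K p m (b + i) hbi,
      aeval_Xc K p m i (by omega), aeval_Xc K p m p le_rfl, aeval_Xc K p m 0 (by omega),
      ← pow_mul, ← pow_mul, ← pow_add, ← pow_add]
    have hexp : m (b + i) + m p * a = m i + m 0 * (a + d) := by
      simp only [hm]; ring
    rw [hexp, sub_self]

def nuF (p a b : ℕ) (m : ℕ → ℕ) : (ℕ ⊕ {t : ℕ × ℕ × ℕ // GoodT p a b t}) → ℕ
  | .inl u => u * m 0
  | .inr t => t.1.1 * m 0 + m t.1.2.1 + t.1.2.2 * m p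

lemma keyUW (m0 d : ℕ) (hm0 : 0 < m0) (hgcd : Nat.Coprime m0 d) :
    ∀ U W U' W', W < m0 → W' < m0 → U * m0 + W * d = U' * m0 + W' * d →
      U = U' ∧ W = W' := by
  have aux : ∀ U W U' W', W < m0 → W' < m0 → W ≤ W' →
      U * m0 + W * d = U' * m0 + W' * d → U = U' ∧ W = W' := by
    intro U W U' W' hW hW' hle heq
    have h1 : W * d ≤ W' * d := Nat.mul_le_mul_right d hle
    have hU' : U' * m0 ≤ U * m0 := by linarith
    have hUle : U' ≤ U := Nat.le_of_mul_le_mul_right hU' hm0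
    have e1 : (U - U') * m0 + U' * m0 = U * m0 := by rw [← Nat.add_mul]; congr 1; omega
    have e2 : (W' - W) * d + W * d = W' * d := by rw [← Nat.add_mul]; congr 1; omega
    have e3 : (U - U') * m0 = (W' - W) * d := by linarith
    have hdvd : m0 ∣ (W' - W) * d := ⟨U - U', by rw [← e3, Nat.mul_comm]⟩
    have hdvd2 : m0 ∣ W' - W := hgcd.dvd_of_dvd_mul_right hdvd
    have hWW : W' - W = 0 := by
      rcases Nat.eq_zero_or_pos (W' - W) with h | h
      · exact h
      · exact absurd (Nat.le_of_dvd h hdvd2) (by omega)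
    have hW2 : W = W' := by omega
    subst hW2
    have h5 : U * m0 = U' * m0 := by linarith
    exact ⟨Nat.eq_of_mul_eq_mul_right hm0 h5, rfl⟩
  intro U W U' W' hW hW' heq
  rcases le_total W W' with h | h
  · exact aux U W U' W' hW hW' h heq
  · obtain ⟨h1, h2⟩ := aux U' W' U W hW' hW h heq.symm
    exact ⟨h1.symm, h2.symm⟩

lemma jv_unique (p : ℕ) : ∀ j v j' v' : ℕ, 1 ≤ j → j ≤ p → 1 ≤ j' → j' ≤ p →
    j + v * p = j' + v' * p → j = j' ∧ v = v' := by
  have aux : ∀ j v j' v' : ℕ, 1 ≤ j → j ≤ p → 1 ≤ j' → j' ≤ p → v ≤ v' →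
      j + v * p = j' + v' * p → j = j' ∧ v = v' := by
    intro j v j' v' h1 h2 h3 h4 hle heq
    rcases Nat.eq_or_lt_of_le hle with h | h
    · subst h
      exact ⟨by linarith, rfl⟩
    · exfalso
      have e2 : (v' - v) * p + v * p = v' * p := by rw [← Nat.add_mul]; congr 1; omega
      have e3 : p ≤ (v' - v) * p := by
        calc p = 1 * p := (one_mul p).symm
        _ ≤ (v' - v) * p := Nat.mul_le_mul_right p (by omega)
      linarith
  intro j v j' v' h1 h2 h3 h4 heq
  rcases le_total v v' with h | h
  · exact aux _ _ _ _ h1 h2 h3 h4 h heq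
  · obtain ⟨a1, a2⟩ := aux _ _ _ _ h3 h4 h1 h2 h heq.symm
    exact ⟨a1.symm, a2.symm⟩

lemma nuF_inj (p d a b : ℕ) (hp : 2 ≤ p) (hd : 1 ≤ d) (ha : 1 ≤ a)
    (hb1 : 1 ≤ b) (hbp : b ≤ p)
    (m : ℕ → ℕ) (hm : ∀ i, m i = a * p + b + i * d) (hgcd : Nat.gcd (m 0) d = 1) :
    Function.Injective (nuF p a b m) := by
  have hm0 : m 0 = a * p + b := by rw [hm]; ring
  have hap : 1 * 1 ≤ a * p := Nat.mul_le_mul ha (by omega)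
  have hm0pos : 0 < a * p + b := by omega
  have hcop : Nat.Coprime (a * p + b) d := by rw [← hm0]; exact hgcd
  have hWbound : ∀ j v : ℕ, 1 ≤ j → j ≤ p → v ≤ a → (j < b ∨ v < a) →
      j + v * p < a * p + b := by
    intro j v h1 h2 h3 h4
    rcases h4 with h | h
    · have h5 : v * p ≤ a * p := Nat.mul_le_mul_right p h3
      linarith
    · have h5 : (v + 1) * p ≤ a * p := Nat.mul_le_mul_right p (by omega)
      rw [add_mul, one_mul] at h5
      linarith
  have hvr : ∀ u j v : ℕ, u * m 0 + m j + v * m p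
      = (u + 1 + v) * (a * p + b) + (j + v * p) * d := by
    intro u j v; simp only [hm]; ring
  have hvl : ∀ u : ℕ, u * m 0 = u * (a * p + b) + 0 * d := by
    intro u; simp only [hm0]; ring
  intro t t' heq
  rcases t with u | ⟨⟨u, j, v⟩, hG⟩ <;> rcases t' with u' | ⟨⟨u', j', v'⟩, hG'⟩
  · simp only [nuF] at heq
    rw [hm0] at heq
    exact congrArg Sum.inl (Nat.eq_of_mul_eq_mul_right hm0pos heq)
  · exfalso
    obtain ⟨hG1, hG2, hG3, hG4⟩ := hG'
    replace hG1 : 1 ≤ j' := hG1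
    replace hG2 : j' ≤ p := hG2
    replace hG3 : v' ≤ a := hG3
    replace hG4 : j' < b ∨ v' < a := hG4
    simp only [nuF] at heq
    rw [hvl u, hvr u' j' v'] at heq
    obtain ⟨_, hW⟩ := keyUW (a * p + b) d hm0pos hcop _ _ _ _ (by omega)
      (hWbound j' v' hG1 hG2 hG3 hG4) heq
    omega
  · exfalso
    obtain ⟨hG1, hG2, hG3, hG4⟩ := hG
    replace hG1 : 1 ≤ j := hG1
    replace hG2 : j ≤ p := hG2
    replace hG3 : v ≤ a := hG3
    replace hG4 : j < b ∨ v < a := hG4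
    simp only [nuF] at heq
    rw [hvl u', hvr u j v] at heq
    obtain ⟨_, hW⟩ := keyUW (a * p + b) d hm0pos hcop _ _ _ _
      (hWbound j v hG1 hG2 hG3 hG4) (by omega) heq
    omega
  · obtain ⟨hG1, hG2, hG3, hG4⟩ := hG
    replace hG1 : 1 ≤ j := hG1
    replace hG2 : j ≤ p := hG2
    replace hG3 : v ≤ a := hG3
    replace hG4 : j < b ∨ v < a := hG4
    obtain ⟨hH1, hH2, hH3, hH4⟩ := hG'
    replace hH1 : 1 ≤ j' := hH1
    replace hH2 : j' ≤ p := hH2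
    replace hH3 : v' ≤ a := hH3
    replace hH4 : j' < b ∨ v' < a := hH4
    simp only [nuF] at heq
    rw [hvr u j v, hvr u' j' v'] at heq
    obtain ⟨hU, hW⟩ := keyUW (a * p + b) d hm0pos hcop _ _ _ _
      (hWbound j v hG1 hG2 hG3 hG4) (hWbound j' v' hH1 hH2 hH3 hH4) heq
    obtain ⟨hj, hv⟩ := jv_unique p j v j' v' hG1 hG2 hH1 hH2 hW
    obtain rfl : j = j' := hj
    obtain rfl : v = v' := hv
    obtain rfl : u = u' := by omega
    rfl
/-- The ideal `℘` equals the ideal generated by `𝒢'`. -/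
theorem curveIdeal_eq_span_Gset
    (K : Type*) [Field K]
    (p d a b : ℕ) (hp : 2 ≤ p) (hd : 1 ≤ d) (ha : 1 ≤ a) (hb1 : 1 ≤ b) (hbp : b ≤ p)
    (m : ℕ → ℕ) (hm : ∀ i, m i = a * p + b + i * d)
    (hgcd : Nat.gcd (m 0) d = 1)
    (hmin : ∀ i ≤ p, m i ∉ AddSubmonoid.closure {x : ℕ | ∃ j ≤ p, j ≠ i ∧ x = m j}) :
    curveIdeal K p m = Ideal.span (Gset K p a b d) := by
  classical
  set I := Ideal.span (Gset K p a b d) with hI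
  set L := (MvPolynomial.aeval (R := K)
    (fun k : Fin (p + 1) => (Polynomial.X : Polynomial K) ^ m (k : ℕ))) with hL
  have hker : ∀ g ∈ Gset K p a b d, L g = 0 := Gset_ker K p d a b hbp m hm
  have hIle : ∀ x ∈ I, L x = 0 := by
    intro x hx
    have hsub : I ≤ RingHom.ker L.toRingHom :=
      Ideal.span_le.mpr (fun g hg => RingHom.mem_ker.mpr (hker g hg))
    exact RingHom.mem_ker.mp (hsub hx)
  refine le_antisymm ?_ ?_
  · intro f hf
    have hf0 : L f = 0 := RingHom.mem_ker.mp hf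
    set Lbar := Ideal.Quotient.liftₐ I L hIle with hLbar
    have htop := span_sFam_top K p a b d hp ha hb1 hbp
    have hmem : Ideal.Quotient.mk I f ∈ Submodule.span K (Set.range (sFam K p a b d)) := by
      rw [htop]; trivial
    obtain ⟨c, hc⟩ := Finsupp.mem_span_range_iff_exists_finsupp.mp hmem
    have hLbar_s : ∀ t, Lbar (sFam K p a b d t)
        = (Polynomial.X : Polynomial K) ^ nuF p a b m t := by
      intro t
      rcases t with u | ⟨⟨u, j, v⟩, hG⟩
      · show Lbar (Ideal.Quotient.mk I (Xc K p 0 ^ u)) = _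
        rw [hLbar, Ideal.Quotient.liftₐ_apply]
        show L (Xc K p 0 ^ u) = _
        rw [map_pow, hL, aeval_Xc K p m 0 (by omega), ← pow_mul]
        have : m 0 * u = nuF p a b m (Sum.inl u) := by simp [nuF]; ring
        rw [this]
      · obtain ⟨hG1, hG2, hG3, hG4⟩ := hG
        replace hG2 : j ≤ p := hG2
        show Lbar (Ideal.Quotient.mk I (Xc K p 0 ^ u * Xc K p j * Xc K p p ^ v)) = _
        rw [hLbar, Ideal.Quotient.liftₐ_apply]
        show L (Xc K p 0 ^ u * Xc K p j * Xc K p p ^ v) = _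
        rw [map_mul, map_mul, map_pow, map_pow, hL, aeval_Xc K p m 0 (by omega),
          aeval_Xc K p m j hG2, aeval_Xc K p m p le_rfl,
          ← pow_mul, ← pow_mul, ← pow_add, ← pow_add]
        have : m 0 * u + m j + m p * v
            = nuF p a b m (Sum.inr ⟨(u, j, v), ⟨hG1, hG2, hG3, hG4⟩⟩) := by
          simp [nuF]; ring
        rw [this]
    have h0 : Lbar (Ideal.Quotient.mk I f) = 0 := by
      rw [hLbar, Ideal.Quotient.liftₐ_apply]
      exact hf0
    rw [← hc, map_finsuppSum] at h0
    simp only [map_smul, hLbar_s] at h0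
    have hLI : LinearIndependent K
        (fun t => (Polynomial.X : Polynomial K) ^ nuF p a b m t) := by
      have h1 := (Polynomial.basisMonomials K).linearIndependent.comp _
        (nuF_inj p d a b hp hd ha hb1 hbp m hm hgcd)
      have h2 : (fun t => (Polynomial.X : Polynomial K) ^ nuF p a b m t)
          = (⇑(Polynomial.basisMonomials K) ∘ nuF p a b m) := by
        funext t
        simp [Polynomial.coe_basisMonomials, Polynomial.X_pow_eq_monomial]
      rw [h2]
      exact h1
    have hc0 : c = 0 := by
      apply linearIndependent_iff.mp hLI c
      rw [Finsupp.linearCombination_apply]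
      exact h0
    rw [hc0, Finsupp.sum_zero_index] at hc
    exact (Ideal.Quotient.eq_zero_iff_mem).mp hc.symm
  · exact Ideal.span_le.mpr (fun g hg => RingHom.mem_ker.mpr (hker g hg))
end

section
/- Let f and g be distinct monomials of R such that neither f nor g is divisible by any monomial X_i·X_j with i, j ∈ {1,…,p−1}, nor by any monomial X_{b+i}·X_p^a with i ∈ {0,…,p−b}. Then ω(f) ≠ ω(g); equivalently f − g ∉ ℘. (This is the content of the statement that 𝒢' = {φ(i,j)} ∪ {ψ(b,i)} is a Gröbner basis of ℘ with respect to the order >_R: the monomials outside the monomial ideal generated by the leading terms of 𝒢' represent pairwise distinct elements of R/℘.) -/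
open MvPolynomial
open Fin.NatCast

private lemma canon {p : ℕ} (hp : 2 ≤ p)
    (γ : Fin (p+1) →₀ ℕ)
    (C1 : ∀ k : Fin (p+1), 1 ≤ (k:ℕ) → (k:ℕ) < p → γ k ≤ 1)
    (C2 : ∀ k l : Fin (p+1), 1 ≤ (k:ℕ) → (k:ℕ) < p → 1 ≤ (l:ℕ) → (l:ℕ) < p → k ≠ l →
      γ k = 0 ∨ γ l = 0) :
    ∃ c : ℕ, c < p ∧ (∑ k : Fin (p+1), γ k * (k:ℕ)) = c + γ (Fin.last p) * p ∧
      ∀ k : Fin (p+1), 1 ≤ (k:ℕ) → (k:ℕ) < p → γ k = if (k:ℕ) = c then 1 else 0 := by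
  rw [Fin.sum_univ_castSucc]
  simp only [Fin.val_last, Fin.coe_castSucc]
  by_cases hex : ∀ k : Fin p, 1 ≤ (k:ℕ) → γ k.castSucc = 0
  · refine ⟨0, by omega, ?_, ?_⟩
    · have : ∑ k : Fin p, γ k.castSucc * (k:ℕ) = 0 := by
        apply Finset.sum_eq_zero
        intro k _
        rcases Nat.eq_zero_or_pos (k:ℕ) with h | h
        · simp [h]
        · simp [hex k h]
      omega
    · intro k hk1 hk2
      have hk := hex ⟨(k:ℕ), hk2⟩ hk1
      have : (⟨(k:ℕ), hk2⟩ : Fin p).castSucc = k := by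
        apply Fin.ext; simp
      rw [this] at hk
      rw [hk, if_neg (by omega)]
  · push_neg at hex
    obtain ⟨k0, hk01, hk0ne⟩ := hex
    have hk0lt : (k0:ℕ) < p := k0.isLt
    have hγ1 : γ k0.castSucc = 1 := by
      have := C1 k0.castSucc (by simpa using hk01) (by simpa using hk0lt)
      omega
    refine ⟨(k0:ℕ), hk0lt, ?_, ?_⟩
    · have : ∑ k : Fin p, γ k.castSucc * (k:ℕ) = (k0:ℕ) := by
        rw [Finset.sum_eq_single k0]
        · rw [hγ1, one_mul]
        · intro k _ hk
          rcases Nat.eq_zero_or_pos (k:ℕ) with h | h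
          · simp [h]
          · have hne : k.castSucc ≠ k0.castSucc := by
              simpa using hk
            rcases C2 k.castSucc k0.castSucc (by rw [Fin.coe_castSucc]; exact h) (by simpa using k.isLt)
              (by simpa using hk01) (by simpa using hk0lt) hne with h0 | h0
            · simp [h0]
            · exact absurd h0 hk0ne
        · simp
      rw [this]
    · intro k hk1 hk2
      by_cases hkc : (k:ℕ) = (k0:ℕ)
      · have : k = k0.castSucc := by apply Fin.ext; simpa using hkc
        rw [this, hγ1]; simp
      · have hne : k ≠ k0.castSucc := by
          intro h; apply hkc; rw [h]; simp
        rcases C2 k k0.castSucc hk1 hk2 (by simpa using hk01) (by simpa using hk0lt) hne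
          with h0 | h0
        · rw [h0, if_neg hkc]
        · exact absurd h0 hk0ne

private lemma single_add_single_le {n : ℕ} {i j : Fin n} {γ : Fin n →₀ ℕ}
    (hij : i ≠ j) {x y : ℕ} (hx : x ≤ γ i) (hy : y ≤ γ j) :
    Finsupp.single i x + Finsupp.single j y ≤ γ := by
  rw [Finsupp.le_def]
  intro t
  rw [Finsupp.add_apply, Finsupp.single_apply, Finsupp.single_apply]
  by_cases h1 : i = t <;> by_cases h2 : j = t <;> simp_all

private lemma dvd_monomial_of_le {K : Type*} [Field K] {n : ℕ} {s γ : Fin n →₀ ℕ}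
    (h : s ≤ γ) : (monomial s (1:K)) ∣ monomial γ 1 :=
  monomial_dvd_monomial.mpr ⟨Or.inr h, dvd_rfl⟩

private lemma extract {K : Type*} [Field K] {p a b : ℕ} (hp : 2 ≤ p) (hb1 : 1 ≤ b) (hbp : b ≤ p)
    (γ : Fin (p+1) →₀ ℕ)
    (h1 : ∀ i j : ℕ, 1 ≤ i → i < p → 1 ≤ j → j < p →
      ¬ (X ((i : ℕ) : Fin (p + 1)) * X ((j : ℕ) : Fin (p + 1)) ∣ (monomial γ (1:K))))
    (h2 : ∀ i : ℕ, i ≤ p - b →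
      ¬ (X ((b + i : ℕ) : Fin (p + 1)) * (X ((p : ℕ) : Fin (p + 1))) ^ a ∣ (monomial γ (1:K)))) :
    (∀ k : Fin (p+1), 1 ≤ (k:ℕ) → (k:ℕ) < p → γ k ≤ 1) ∧
    (∀ k l : Fin (p+1), 1 ≤ (k:ℕ) → (k:ℕ) < p → 1 ≤ (l:ℕ) → (l:ℕ) < p → k ≠ l →
        γ k = 0 ∨ γ l = 0) ∧
    γ (Fin.last p) ≤ a ∧
    (∀ k : Fin (p+1), b ≤ (k:ℕ) → (k:ℕ) < p → 1 ≤ γ k → γ (Fin.last p) < a) := by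
  have hXX : ∀ i j : Fin (p+1), (X i * X j : MvPolynomial (Fin (p+1)) K)
      = monomial (Finsupp.single i 1 + Finsupp.single j 1) 1 := by
    intro i j; rw [X, X, monomial_mul, one_mul]
  have hXXa : ∀ i j : Fin (p+1), (X i * X j ^ a : MvPolynomial (Fin (p+1)) K)
      = monomial (Finsupp.single i 1 + Finsupp.single j a) 1 := by
    intro i j; rw [X, X_pow_eq_monomial, monomial_mul, one_mul]
  have hlast : ((p : ℕ) : Fin (p+1)) = Fin.last p := by
    apply Fin.ext
    rw [Fin.val_cast_of_lt (by omega), Fin.val_last]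
  refine ⟨?_, ?_, ?_, ?_⟩
  · -- C1
    intro k hk1 hk2
    by_contra h
    push_neg at h
    apply h1 (k:ℕ) (k:ℕ) hk1 hk2 hk1 hk2
    rw [Fin.cast_val_eq_self, hXX]
    apply dvd_monomial_of_le
    have : Finsupp.single k 1 + Finsupp.single k 1 = Finsupp.single k 2 := by
      rw [← Finsupp.single_add]
    rw [this, Finsupp.single_le_iff]
    omega
  · -- C2
    intro k l hk1 hk2 hl1 hl2 hkl
    by_contra h
    push_neg at h
    apply h1 (k:ℕ) (l:ℕ) hk1 hk2 hl1 hl2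
    rw [Fin.cast_val_eq_self, Fin.cast_val_eq_self, hXX]
    exact dvd_monomial_of_le (single_add_single_le hkl (by omega) (by omega))
  · -- C3
    by_contra h
    push_neg at h
    apply h2 (p - b) (le_refl _)
    have : b + (p - b) = p := by omega
    rw [this, hlast, hXXa]
    apply dvd_monomial_of_le
    have : Finsupp.single (Fin.last p) 1 + Finsupp.single (Fin.last p) a
        = Finsupp.single (Fin.last p) (1 + a) := by
      rw [← Finsupp.single_add]
    rw [this, Finsupp.single_le_iff]
    omega
  · -- C4
    intro k hkb hkp hk1
    by_contra h
    push_neg at h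
    apply h2 ((k:ℕ) - b) (by omega)
    have hbk : b + ((k:ℕ) - b) = (k:ℕ) := by omega
    rw [hbk, Fin.cast_val_eq_self, hlast, hXXa]
    apply dvd_monomial_of_le
    apply single_add_single_le
    · intro he
      have := congrArg Fin.val he
      rw [Fin.val_last] at this
      omega
    · exact hk1
    · omega

private lemma weight_eq {p d a b : ℕ} (hp : 2 ≤ p) (hd : 1 ≤ d) (ha : 1 ≤ a) (hb1 : 1 ≤ b)
    (hbp : b ≤ p) (hgcd : Nat.Coprime (a*p+b) d)
    (α β : Fin (p+1) →₀ ℕ)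
    (C1a : ∀ k : Fin (p+1), 1 ≤ (k:ℕ) → (k:ℕ) < p → α k ≤ 1)
    (C2a : ∀ k l : Fin (p+1), 1 ≤ (k:ℕ) → (k:ℕ) < p → 1 ≤ (l:ℕ) → (l:ℕ) < p → k ≠ l →
      α k = 0 ∨ α l = 0)
    (C1b : ∀ k : Fin (p+1), 1 ≤ (k:ℕ) → (k:ℕ) < p → β k ≤ 1)
    (C2b : ∀ k l : Fin (p+1), 1 ≤ (k:ℕ) → (k:ℕ) < p → 1 ≤ (l:ℕ) → (l:ℕ) < p → k ≠ l →
      β k = 0 ∨ β l = 0)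
    (C3b : β (Fin.last p) ≤ a)
    (C4b : ∀ k : Fin (p+1), b ≤ (k:ℕ) → (k:ℕ) < p → 1 ≤ β k → β (Fin.last p) < a)
    (hT : (∑ k : Fin (p+1), α k * (k:ℕ)) ≤ ∑ k : Fin (p+1), β k * (k:ℕ))
    (hw : ∑ k : Fin (p+1), α k * (a*p+b+(k:ℕ)*d) = ∑ k : Fin (p+1), β k * (a*p+b+(k:ℕ)*d)) :
    α = β := by
  obtain ⟨c1, hc1p, hc1T, hc1f⟩ := canon hp α C1a C2a
  obtain ⟨c2, hc2p, hc2T, hc2f⟩ := canon hp β C1b C2b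
  set m0 := a*p+b with hm0
  have hm0pos : 0 < m0 := by positivity
  have expand : ∀ γ : Fin (p+1) →₀ ℕ, ∑ k : Fin (p+1), γ k * (m0 + (k:ℕ)*d)
      = (∑ k : Fin (p+1), γ k) * m0 + (∑ k : Fin (p+1), γ k * (k:ℕ)) * d := by
    intro γ
    rw [Finset.sum_mul, Finset.sum_mul, ← Finset.sum_add_distrib]
    apply Finset.sum_congr rfl
    intro k _
    ring
  rw [expand α, expand β, hc1T, hc2T] at hw
  rw [hc1T, hc2T] at hT
  set S1 := ∑ k : Fin (p+1), α k with hS1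
  set S2 := ∑ k : Fin (p+1), β k with hS2
  set ap := α (Fin.last p) with hap'
  set bp := β (Fin.last p) with hbp'
  -- S2 ≤ S1
  have hTd : (c1 + ap * p) * d ≤ (c2 + bp * p) * d := Nat.mul_le_mul_right _ hT
  have hSm : S2 * m0 ≤ S1 * m0 := by omega
  have hS : S2 ≤ S1 := Nat.le_of_mul_le_mul_right hSm hm0pos
  -- key divisibility
  have key : (S1 - S2) * m0 = ((c2 + bp * p) - (c1 + ap * p)) * d := by
    rw [Nat.sub_mul, Nat.sub_mul]
    omega
  have hdvd : m0 ∣ (c2 + bp * p) - (c1 + ap * p) :=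
    hgcd.dvd_of_dvd_mul_right ⟨S1 - S2, by rw [← key]; ring⟩
  -- bound on T2
  have hbp2 : bp * p ≤ a * p := Nat.mul_le_mul_right _ C3b
  have hap2 : p ≤ a * p := by nlinarith
  -- T2 - T1 = 0 or m0
  have hD : (c2 + bp * p) - (c1 + ap * p) = 0 ∨ (c2 + bp * p) - (c1 + ap * p) = m0 := by
    rcases Nat.lt_or_ge ((c2 + bp * p) - (c1 + ap * p)) m0 with h | h
    · exact Or.inl (Nat.eq_zero_of_dvd_of_lt hdvd h)
    · have h2 : m0 ∣ (c2 + bp * p) - (c1 + ap * p) - m0 := (Nat.dvd_sub hdvd dvd_rfl)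
      have h3 : (c2 + bp * p) - (c1 + ap * p) - m0 = 0 :=
        Nat.eq_zero_of_dvd_of_lt h2 (by omega)
      omega
  rcases hD with hD | hD
  · -- equal case
    have hTeq : c1 + ap * p = c2 + bp * p := by omega
    have hSeq : S1 = S2 := by
      have e : (c1 + ap * p) * d = (c2 + bp * p) * d := by rw [hTeq]
      have : S1 * m0 = S2 * m0 := by omega
      exact Nat.eq_of_mul_eq_mul_right hm0pos this
    have hcc : c1 = c2 ∧ ap = bp := by
      rcases le_total ap bp with h | h
      · have hmul : ap * p ≤ bp * p := Nat.mul_le_mul_right _ h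
        have h' : c1 = c2 + (bp - ap) * p := by
          rw [Nat.sub_mul]; omega
        have h'' : (bp - ap) * p < 1 * p := by omega
        have h3 : ap = bp := by
          have := Nat.lt_of_mul_lt_mul_right h''
          omega
        have h4 : (bp - ap) * p = 0 := by rw [h3, Nat.sub_self, zero_mul]
        exact ⟨by omega, h3⟩
      · have hmul : bp * p ≤ ap * p := Nat.mul_le_mul_right _ h
        have h' : c2 = c1 + (ap - bp) * p := by
          rw [Nat.sub_mul]; omega
        have h'' : (ap - bp) * p < 1 * p := by omega
        have h3 : ap = bp := by
          have := Nat.lt_of_mul_lt_mul_right h''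
          omega
        have h4 : (ap - bp) * p = 0 := by rw [h3, Nat.sub_self, zero_mul]
        exact ⟨by omega, h3⟩
    obtain ⟨hcc1, hcc2⟩ := hcc
    have hrest : ∀ k : Fin (p+1), k ≠ (0 : Fin (p+1)) → α k = β k := by
      intro k hk
      have hk1 : 1 ≤ (k:ℕ) := by
        rcases Nat.eq_zero_or_pos (k:ℕ) with h | h
        · exact absurd (Fin.ext (by simp [h])) hk
        · exact h
      rcases Nat.lt_or_ge (k:ℕ) p with h | h
      · rw [hc1f k hk1 h, hc2f k hk1 h, hcc1]
      · have hkl : k = Fin.last p := Fin.ext (by simp; omega)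
        rw [hkl, ← hap', ← hbp', hcc2]
    have h0 : α 0 = β 0 := by
      have e1 : ∑ x ∈ Finset.univ.erase (0 : Fin (p+1)), α x + α 0 = S1 :=
        Finset.sum_erase_add _ _ (Finset.mem_univ _)
      have e2 : ∑ x ∈ Finset.univ.erase (0 : Fin (p+1)), β x + β 0 = S2 :=
        Finset.sum_erase_add _ _ (Finset.mem_univ _)
      have e3 : ∑ x ∈ Finset.univ.erase (0 : Fin (p+1)), α x
          = ∑ x ∈ Finset.univ.erase (0 : Fin (p+1)), β x := by
        apply Finset.sum_congr rfl
        intro k hk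
        exact hrest k (Finset.mem_erase.mp hk).1
      omega
    ext k
    by_cases hk : k = (0 : Fin (p+1))
    · rw [hk]; exact h0
    · exact hrest k hk
  · -- contradiction case
    exfalso
    have hT2ge : m0 ≤ c2 + bp * p := by omega
    have hbeta : bp = a := by
      by_contra h
      have hlt : bp ≤ a - 1 := by omega
      have hm : bp * p ≤ (a-1) * p := Nat.mul_le_mul_right _ hlt
      rw [Nat.sub_mul] at hm
      omega
    have hbap : bp * p = a * p := by rw [hbeta]
    have hc2b : b ≤ c2 := by omega
    have hc2lt : c2 < p + 1 := by omega
    have hkcv : ((⟨c2, hc2lt⟩ : Fin (p+1)) : ℕ) = c2 := rfl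
    have hone := hc2f ⟨c2, hc2lt⟩ (by rw [hkcv]; omega) (by rw [hkcv]; exact hc2p)
    rw [hkcv, if_pos rfl] at hone
    have := C4b ⟨c2, hc2lt⟩ (by rw [hkcv]; exact hc2b) (by rw [hkcv]; exact hc2p) (by omega)
    omega

private lemma eval_mono {K : Type*} [Field K] {p : ℕ} (m : ℕ → ℕ) (γ : Fin (p+1) →₀ ℕ) :
    (MvPolynomial.aeval (R := K)
      (fun k : Fin (p + 1) => (Polynomial.X : Polynomial K) ^ m (k : ℕ))) (monomial γ 1)
    = Polynomial.X ^ (∑ k : Fin (p+1), γ k * m (k:ℕ)) := by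
  rw [aeval_monomial, map_one, one_mul]
  rw [Finsupp.prod]
  have : ∀ i ∈ γ.support, ((Polynomial.X : Polynomial K) ^ m (i:ℕ)) ^ γ i
      = Polynomial.X ^ (γ i * m (i:ℕ)) := by
    intro i _
    rw [← pow_mul, Nat.mul_comm]
  rw [Finset.prod_congr rfl this, Finset.prod_pow_eq_pow_sum]
  congr 1
  apply Finset.sum_subset (Finset.subset_univ _)
  intro k _ hk
  simp [Finsupp.notMem_support_iff.mp hk]

theorem standard_monomials_distinct_weights
    (K : Type*) [Field K]
    (p d a b : ℕ) (hp : 2 ≤ p) (hd : 1 ≤ d) (ha : 1 ≤ a) (hb1 : 1 ≤ b) (hbp : b ≤ p)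
    (m : ℕ → ℕ) (hm : ∀ i, m i = a * p + b + i * d)
    (hgcd : Nat.gcd (m 0) d = 1)
    (hmin : ∀ i ≤ p, m i ∉ AddSubmonoid.closure {x : ℕ | ∃ j ≤ p, j ≠ i ∧ x = m j})
    (α β : Fin (p + 1) →₀ ℕ) (f g : MvPolynomial (Fin (p + 1)) K)
    (hf : f = monomial α 1) (hg : g = monomial β 1) (hfg : f ≠ g)
    (hdvd1 : ∀ i j : ℕ, 1 ≤ i → i < p → 1 ≤ j → j < p →
      ¬ (X ((i : ℕ) : Fin (p + 1)) * X ((j : ℕ) : Fin (p + 1)) ∣ f) ∧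
      ¬ (X ((i : ℕ) : Fin (p + 1)) * X ((j : ℕ) : Fin (p + 1)) ∣ g))
    (hdvd2 : ∀ i : ℕ, i ≤ p - b →
      ¬ (X ((b + i : ℕ) : Fin (p + 1)) * (X ((p : ℕ) : Fin (p + 1))) ^ a ∣ f) ∧
      ¬ (X ((b + i : ℕ) : Fin (p + 1)) * (X ((p : ℕ) : Fin (p + 1))) ^ a ∣ g)) :
    (∑ k : Fin (p + 1), α k * m (k : ℕ)) ≠ (∑ k : Fin (p + 1), β k * m (k : ℕ)) ∧
      f - g ∉ curveIdeal K p m := by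
  have hcop : Nat.Coprime (a*p+b) d := by
    have h0 := hgcd
    rw [hm 0] at h0
    simpa [Nat.Coprime] using h0
  obtain ⟨C1a, C2a, C3a, C4a⟩ := extract hp hb1 hbp α
    (fun i j h1 h2 h3 h4 => hf ▸ (hdvd1 i j h1 h2 h3 h4).1)
    (fun i hi => hf ▸ (hdvd2 i hi).1)
  obtain ⟨C1b, C2b, C3b, C4b⟩ := extract hp hb1 hbp β
    (fun i j h1 h2 h3 h4 => hg ▸ (hdvd1 i j h1 h2 h3 h4).2)
    (fun i hi => hg ▸ (hdvd2 i hi).2)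
  have hαβ : α ≠ β := fun h => hfg (by rw [hf, hg, h])
  have first : (∑ k : Fin (p + 1), α k * m (k : ℕ)) ≠ ∑ k : Fin (p + 1), β k * m (k : ℕ) := by
    intro hw
    have hw' : ∑ k : Fin (p+1), α k * (a*p+b+(k:ℕ)*d)
        = ∑ k : Fin (p+1), β k * (a*p+b+(k:ℕ)*d) := by
      simpa [hm] using hw
    rcases le_total (∑ k : Fin (p+1), α k * (k:ℕ)) (∑ k : Fin (p+1), β k * (k:ℕ)) with h | h
    · exact hαβ (weight_eq hp hd ha hb1 hbp hcop α β C1a C2a C1b C2b C3b C4b h hw')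
    · exact hαβ (weight_eq hp hd ha hb1 hbp hcop β α C1b C2b C1a C2a C3a C4a h hw'.symm).symm
  refine ⟨first, ?_⟩
  intro hmem
  rw [curveIdeal, RingHom.mem_ker] at hmem
  rw [AlgHom.toRingHom_eq_coe, RingHom.coe_coe, map_sub, hf, hg,
    eval_mono m α, eval_mono m β, sub_eq_zero] at hmem
  have := congrArg (fun q : Polynomial K => q.coeff (∑ k : Fin (p + 1), α k * m (k : ℕ))) hmem
  rw [Polynomial.coeff_X_pow, Polynomial.coeff_X_pow, if_pos rfl, if_neg first] at this
  exact one_ne_zero this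
end
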